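/- arXiv:1703.02648 — 7 statements merged into one kernel-verified Lean document; each statement's English description precedes it below -/
import Mathlib

section
/- Let f : ℝⁿ → ℝ be convex, let ε ≥ 0, λ ≥ 0, let x, y ∈ ℝⁿ, let v ∈ ∂_ε f(x), set z = x − λv, and let w ∈ ∂f(z). Then ‖z − y‖² ≤ ‖x − y‖² − 2λ(f(z) − f(y)) + λ(λ‖v‖² + 2ε − 2λ⟨w, v⟩). -/
open Filter Topology

/-- ε-subgradient step inequality with the function value evaluated at the new
point `z = x - λ • v`, where `w ∈ ∂f(z)`. -/
theorem epsilon_subgradient_step_at_new_point {n : ℕ}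
    (f : EuclideanSpace ℝ (Fin n) → ℝ) (hf : ConvexOn ℝ Set.univ f)
    (ε lam : ℝ) (hε : 0 ≤ ε) (hlam : 0 ≤ lam)
    (x y v : EuclideanSpace ℝ (Fin n))
    (hv : ∀ u, f u ≥ f x + inner ℝ v (u - x) - ε)
    (z : EuclideanSpace ℝ (Fin n)) (hz : z = x - lam • v)
    (w : EuclideanSpace ℝ (Fin n))
    (hw : ∀ u, f u ≥ f z + inner ℝ w (u - z)) :
    ‖z - y‖ ^ 2
      ≤ ‖x - y‖ ^ 2 - 2 * lam * (f z - f y)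
        + lam * (lam * ‖v‖ ^ 2 + 2 * ε - 2 * lam * inner ℝ w v) := by
  have hvy := hv y
  have hwx := hw x
  have hxz : x - z = lam • v := by rw [hz]; abel
  rw [hxz, real_inner_smul_right] at hwx
  have hvyx : (inner ℝ v (y - x) : ℝ) = - inner ℝ v (x - y) := by
    rw [← inner_neg_right]; congr 1; abel
  rw [hvyx] at hvy
  have h1 : f z - f y ≤ inner ℝ v (x - y) + ε - lam * inner ℝ w v := by linarith
  have hnorm : ‖z - y‖ ^ 2
      = ‖x - y‖ ^ 2 - 2 * lam * inner ℝ v (x - y) + lam ^ 2 * ‖v‖ ^ 2 := by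
    have : z - y = (x - y) - lam • v := by rw [hz]; abel
    rw [this, norm_sub_sq_real, real_inner_smul_right, norm_smul,
      real_inner_comm]
    simp [abs_of_nonneg hlam, mul_pow]
    ring
  rw [hnorm]
  nlinarith [mul_le_mul_of_nonneg_left h1 hlam]
end

section
/- Let f : ℝⁿ → ℝ be convex, let λ > 0 and γ > 0, let ϱ(λ) ∈ ℝ, and let O : ℝ × ℝⁿ → ℝⁿ be a map such that for all x, y ∈ ℝⁿ: ‖O(λ, x) − y‖² ≤ ‖x − y‖² − 2λ(f(x) − f(y)) + λϱ(λ), and ‖O(λ, x) − x‖ ≤ λγ. Then for all x, y ∈ ℝⁿ and every subgradient w ∈ ∂f(O(λ, x)), one has ‖O(λ, x) − y‖² ≤ ‖x − y‖² − 2λ(f(O(λ, x)) − f(y)) + λ(ϱ(λ) + 2λγ‖w‖). -/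
open Filter Topology

/-- If an operator `O` satisfies a descent inequality with the function value
at the starting point and a boundedness estimate, then it satisfies the
descent inequality with the function value at the resulting point, with an
extra error term `2λγ‖w‖` for any subgradient `w` of `f` at `O(λ, x)`. -/
theorem optimality_operator_value_at_image {n : ℕ}
    (f : EuclideanSpace ℝ (Fin n) → ℝ) (hf : ConvexOn ℝ Set.univ f)
    (lam γ : ℝ) (hlam : 0 < lam) (hγ : 0 < γ) (ϱ : ℝ)
    (O : ℝ → EuclideanSpace ℝ (Fin n) → EuclideanSpace ℝ (Fin n))
    (h1 : ∀ x y, ‖O lam x - y‖ ^ 2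
        ≤ ‖x - y‖ ^ 2 - 2 * lam * (f x - f y) + lam * ϱ)
    (h2 : ∀ x, ‖O lam x - x‖ ≤ lam * γ) :
    ∀ x y w, (∀ u, f u ≥ f (O lam x) + inner ℝ w (u - O lam x)) →
      ‖O lam x - y‖ ^ 2
        ≤ ‖x - y‖ ^ 2 - 2 * lam * (f (O lam x) - f y)
          + lam * (ϱ + 2 * lam * γ * ‖w‖) := by
  intro x y w hw
  have hx := hw x
  have hb : (inner ℝ w (x - O lam x) : ℝ) ≥ -(‖w‖ * (lam * γ)) := by
    have h3 : |(inner ℝ w (x - O lam x) : ℝ)| ≤ ‖w‖ * ‖x - O lam x‖ :=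
      abs_real_inner_le_norm w (x - O lam x)
    have h4 : ‖x - O lam x‖ ≤ lam * γ := by
      rw [norm_sub_rev]; exact h2 x
    nlinarith [abs_nonneg ((inner ℝ w (x - O lam x) : ℝ)), norm_nonneg w,
      neg_abs_le ((inner ℝ w (x - O lam x) : ℝ))]
  have := h1 x y
  nlinarith [norm_nonneg w]
end

section
/- Let f¹, …, fᵐ : ℝⁿ → ℝ be convex functions such that every subgradient of fⁱ at any point has norm at most C_i, and set f = Σ_{i=1}^m fⁱ. Let λ ≥ 0, x ∈ ℝⁿ, and let z be the output of an incremental subgradient pass from x with stepsize λ. Then for every y ∈ ℝⁿ: ‖z − y‖² ≤ ‖x − y‖² − 2λ(f(x) − f(y)) + λ²(Σ_{i=1}^m C_i)². -/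
open Filter Topology

/-- `v` is a subgradient of `f` at `x`. -/
def IsSubgrad {n : ℕ} (f : EuclideanSpace ℝ (Fin n) → ℝ)
    (v x : EuclideanSpace ℝ (Fin n)) : Prop :=
  ∀ y, f y ≥ f x + inner ℝ v (y - x)

/-- `z` is the output of an incremental subgradient pass for `f 0, …, f (m-1)`
starting at `x` with stepsize `lam`. -/
def IsIncPass {n m : ℕ} (f : Fin m → (EuclideanSpace ℝ (Fin n) → ℝ))
    (lam : ℝ) (x z : EuclideanSpace ℝ (Fin n)) : Prop :=
  ∃ w : Fin (m + 1) → EuclideanSpace ℝ (Fin n),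
    w 0 = x ∧ w (Fin.last m) = z ∧
    ∀ i : Fin m, ∃ v, IsSubgrad (f i) v (w i.castSucc) ∧
      w i.succ = w i.castSucc - lam • v

/-- A finite convex function on Euclidean space has a subgradient everywhere. -/
lemma exists_isSubgrad {n : ℕ} {g : EuclideanSpace ℝ (Fin n) → ℝ}
    (hg : ConvexOn ℝ Set.univ g) (x : EuclideanSpace ℝ (Fin n)) :
    ∃ v, IsSubgrad g v x := by
  have hcont : Continuous g := by
    have := hg.continuousOn isOpen_univ
    rwa [← continuousOn_univ]
  set S : Set (EuclideanSpace ℝ (Fin n) × ℝ) := {p | g p.1 < p.2} with hS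
  have hSopen : IsOpen S := isOpen_lt (hcont.comp continuous_fst) continuous_snd
  have hSconv : Convex ℝ S := by
    have h1 : ConvexOn ℝ Set.univ (g ∘ (AffineMap.fst : EuclideanSpace ℝ (Fin n) × ℝ →ᵃ[ℝ] EuclideanSpace ℝ (Fin n))) := by
      have := hg.comp_affineMap (AffineMap.fst : EuclideanSpace ℝ (Fin n) × ℝ →ᵃ[ℝ] EuclideanSpace ℝ (Fin n))
      simpa using this
    have h2 : ConvexOn ℝ Set.univ (fun p : EuclideanSpace ℝ (Fin n) × ℝ => -p.2) :=
      (-(LinearMap.snd ℝ (EuclideanSpace ℝ (Fin n)) ℝ)).convexOn convex_univ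
    have h3 := (h1.add h2).convex_lt 0
    have : S = {p : EuclideanSpace ℝ (Fin n) × ℝ | p ∈ Set.univ ∧
        (g ∘ (AffineMap.fst : EuclideanSpace ℝ (Fin n) × ℝ →ᵃ[ℝ] EuclideanSpace ℝ (Fin n))) p + (fun p : EuclideanSpace ℝ (Fin n) × ℝ => -p.2) p < 0} := by
      ext p
      simp only [hS, Set.mem_setOf_eq, Set.mem_univ, true_and, Function.comp_apply,
        AffineMap.coe_fst]
      constructor <;> intro h <;> linarith
    rwa [this]
  have hdisj : (x, g x) ∉ S := by simp [hS]
  obtain ⟨L, hL⟩ := geometric_hahn_banach_open_point hSconv hSopen hdisj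
  set c : ℝ := L (0, 1) with hc
  set φ : EuclideanSpace ℝ (Fin n) → ℝ := fun p => L (p, 0) with hφ
  have hLsplit : ∀ (p : EuclideanSpace ℝ (Fin n)) (t : ℝ), L (p, t) = φ p + t * c := by
    intro p t
    have : (p, t) = (p, (0:ℝ)) + t • ((0:EuclideanSpace ℝ (Fin n)), (1:ℝ)) := by
      simp [Prod.ext_iff]
    rw [this, map_add, map_smul]
    simp only [smul_eq_mul]
    rfl
  have hcneg : c < 0 := by
    have := hL (x, g x + 1) (by simp [hS])
    rw [hLsplit, hLsplit] at this
    nlinarith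
  have hkey : ∀ p : EuclideanSpace ℝ (Fin n), φ p + g p * c ≤ φ x + g x * c := by
    intro p
    refine le_of_forall_pos_lt_add fun δ hδ => ?_
    have hε : (0:ℝ) < δ / (-c) := div_pos hδ (by linarith)
    have := hL (p, g p + δ / (-c)) (by simp [hS, hε])
    rw [hLsplit, hLsplit] at this
    have hc0 : c ≠ 0 := ne_of_lt hcneg
    have hcc : (δ / (-c)) * c = -δ := by
      have h1 : c / -c = -1 := by rw [div_neg, div_self hc0]
      calc (δ / -c) * c = δ * (c / -c) := by ring
      _ = -δ := by rw [h1]; ring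
    nlinarith
  refine ⟨(InnerProductSpace.toDual ℝ (EuclideanSpace ℝ (Fin n))).symm ((-c)⁻¹ • (L.comp (ContinuousLinearMap.inl ℝ (EuclideanSpace ℝ (Fin n)) ℝ))), ?_⟩
  intro p
  have hinner : (inner ℝ ((InnerProductSpace.toDual ℝ (EuclideanSpace ℝ (Fin n))).symm
      ((-c)⁻¹ • (L.comp (ContinuousLinearMap.inl ℝ (EuclideanSpace ℝ (Fin n)) ℝ)))) (p - x) : ℝ)
      = (-c)⁻¹ * (φ (p - x)) := by
    rw [InnerProductSpace.toDual_symm_apply]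
    simp [hφ, smul_eq_mul]
  rw [hinner]
  have hφsub : φ (p - x) = φ p - φ x := by
    simp only [hφ]
    have : ((p - x : EuclideanSpace ℝ (Fin n)), (0:ℝ)) = (p, (0:ℝ)) - (x, (0:ℝ)) := by simp [Prod.ext_iff]
    rw [this, map_sub]
  rw [hφsub]
  have hp := hkey p
  have hcinv : (0:ℝ) < (-c)⁻¹ := inv_pos.mpr (by linarith)
  rw [ge_iff_le, ← sub_nonneg]
  have hone : (-c)⁻¹ * (-c) = 1 := inv_mul_cancel₀ (ne_of_gt (by linarith : (0:ℝ) < -c))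
  have h6 : (0:ℝ) ≤ (-c)⁻¹ * ((φ x + g x * c) - (φ p + g p * c)) :=
    mul_nonneg hcinv.le (sub_nonneg.mpr hp)
  have h7 : (-c)⁻¹ * ((φ x + g x * c) - (φ p + g p * c))
      = (-c)⁻¹ * (φ x - φ p) + ((-c)⁻¹ * -c) * (g p - g x) := by ring
  rw [h7, hone, one_mul] at h6
  linarith

/-- Bounded subgradients give a one-sided Lipschitz bound. -/
lemma lip_of_subgrad_bound {n : ℕ} {g : EuclideanSpace ℝ (Fin n) → ℝ} {Cg : ℝ}
    (hg : ConvexOn ℝ Set.univ g)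
    (hC : ∀ z v, IsSubgrad g v z → ‖v‖ ≤ Cg)
    (a b : EuclideanSpace ℝ (Fin n)) : g a - g b ≤ Cg * ‖a - b‖ := by
  obtain ⟨v, hv⟩ := exists_isSubgrad hg a
  have h1 := hv b
  have h2 : |(inner ℝ v (b - a) : ℝ)| ≤ ‖v‖ * ‖b - a‖ := abs_real_inner_le_norm v (b - a)
  have h3 : ‖v‖ ≤ Cg := hC a v hv
  have h4 : ‖b - a‖ = ‖a - b‖ := norm_sub_rev b a
  have h5 : (0:ℝ) ≤ ‖a - b‖ := norm_nonneg _
  rw [abs_le] at h2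
  have h6 : g a - g b ≤ -(inner ℝ v (b - a) : ℝ) := by linarith [h1]
  have h7 := mul_le_mul_of_nonneg_right h3 (norm_nonneg (b - a))
  calc g a - g b ≤ -(inner ℝ v (b - a) : ℝ) := h6
    _ ≤ ‖v‖ * ‖b - a‖ := by linarith [h2.1]
    _ ≤ Cg * ‖b - a‖ := h7
    _ = Cg * ‖a - b‖ := by rw [h4]

/-- The basic incremental subgradient inequality (Nedić–Bertsekas), with the
function value at the starting point. -/
theorem incremental_subgradient_inequality {n m : ℕ}
    (f : Fin m → (EuclideanSpace ℝ (Fin n) → ℝ))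
    (hfconv : ∀ i, ConvexOn ℝ Set.univ (f i))
    (C : Fin m → ℝ) (hC : ∀ i, ∀ z v, IsSubgrad (f i) v z → ‖v‖ ≤ C i)
    (lam : ℝ) (hlam : 0 ≤ lam)
    (x z : EuclideanSpace ℝ (Fin n)) (hpass : IsIncPass f lam x z)
    (y : EuclideanSpace ℝ (Fin n)) :
    ‖z - y‖ ^ 2 ≤ ‖x - y‖ ^ 2 - 2 * lam * ((∑ i, f i x) - ∑ i, f i y)
      + lam ^ 2 * (∑ i, C i) ^ 2 := by
  induction m generalizing x z with
  | zero =>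
    obtain ⟨w, hw0, hwl, _⟩ := hpass
    have hz : z = x := by rw [← hw0, ← hwl]; rfl
    simp [hz]
  | succ m ih =>
    obtain ⟨w, hw0, hwl, hstep⟩ := hpass
    obtain ⟨v0, hv0, hstep0⟩ := hstep 0
    have h0c : (0 : Fin (m+1)).castSucc = (0 : Fin (m+2)) := rfl
    obtain ⟨x1, hx1⟩ : ∃ x1, x1 = w (0 : Fin (m+1)).succ := ⟨_, rfl⟩
    -- the remaining pass
    have hpass' : IsIncPass (fun i : Fin m => f i.succ) lam x1 z := by
      refine ⟨fun i => w (i.succ), hx1.symm, ?_, ?_⟩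
      · show w (Fin.last m).succ = z
        exact hwl
      · intro i
        obtain ⟨v, hv, hs⟩ := hstep i.succ
        exact ⟨v, hv, hs⟩
    have ihz := ih (fun i => f i.succ) (fun i => hfconv i.succ)
      (fun i => C i.succ) (fun i => hC i.succ) x1 z hpass'
    beta_reduce at ihz
    -- C is nonnegative
    have hCnn : ∀ i : Fin (m+1), 0 ≤ C i := by
      intro i
      obtain ⟨v, hv⟩ := exists_isSubgrad (hfconv i) 0
      exact le_trans (norm_nonneg v) (hC i 0 v hv)
    -- norm bound on v0
    have hv0n : ‖v0‖ ≤ C 0 := hC 0 _ _ hv0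
    -- first step inequality
    have hx1eq : x1 = x - lam • v0 := by
      rw [hx1, hstep0, h0c, hw0]
    have hstep1 : ‖x1 - y‖ ^ 2 ≤ ‖x - y‖ ^ 2 - 2 * lam * (f 0 x - f 0 y)
        + lam ^ 2 * (C 0) ^ 2 := by
      have hrw : x1 - y = (x - y) - lam • v0 := by
        rw [hx1eq]; abel
      rw [hrw, norm_sub_sq_real]
      have hinner : (inner ℝ (x - y) (lam • v0) : ℝ) = lam * inner ℝ v0 (x - y) := by
        rw [real_inner_smul_right, real_inner_comm]
      have hsub := hv0 y
      rw [h0c, hw0] at hsub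
      have hinn2 : (inner ℝ v0 (y - x) : ℝ) = - inner ℝ v0 (x - y) := by
        rw [← inner_neg_right]; congr 1; abel
      rw [hinn2] at hsub
      have hnv : ‖lam • v0‖ ^ 2 ≤ lam ^ 2 * (C 0) ^ 2 := by
        rw [norm_smul, Real.norm_eq_abs, abs_of_nonneg hlam, mul_pow]
        have h := norm_nonneg v0
        nlinarith [mul_le_mul hv0n hv0n h (h.trans hv0n), sq_nonneg lam,
          mul_le_mul_of_nonneg_left (mul_le_mul hv0n hv0n h (h.trans hv0n)) (sq_nonneg lam)]
      rw [hinner]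
      nlinarith [mul_le_mul_of_nonneg_left (by linarith [hsub] : f 0 x - f 0 y ≤ (inner ℝ v0 (x - y) : ℝ)) hlam]
    -- distance from x to x1
    have hdist : ‖x - x1‖ ≤ lam * C 0 := by
      rw [hx1eq]
      have : x - (x - lam • v0) = lam • v0 := by abel
      rw [this, norm_smul, Real.norm_eq_abs, abs_of_nonneg hlam]
      exact mul_le_mul_of_nonneg_left hv0n hlam
    -- Lipschitz sum bound
    have hsumlip : (∑ i : Fin m, f i.succ x) - (∑ i : Fin m, f i.succ x1)
        ≤ (∑ i : Fin m, C i.succ) * (lam * C 0) := by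
      rw [← Finset.sum_sub_distrib, Finset.sum_mul]
      apply Finset.sum_le_sum
      intro i _
      have hl := lip_of_subgrad_bound (hfconv i.succ) (hC i.succ) x x1
      have := hCnn i.succ
      nlinarith
    have hC0 := hCnn 0
    have hSnn : 0 ≤ ∑ i : Fin m, C i.succ :=
      Finset.sum_nonneg fun i _ => hCnn i.succ
    have e1 : (∑ i, f i x) = f 0 x + ∑ i : Fin m, f i.succ x := Fin.sum_univ_succ _
    have e2 : (∑ i, f i y) = f 0 y + ∑ i : Fin m, f i.succ y := Fin.sum_univ_succ _
    have e3 : (∑ i, C i) = C 0 + ∑ i : Fin m, C i.succ := Fin.sum_univ_succ _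
    rw [e1, e2, e3]
    linarith [mul_le_mul_of_nonneg_left hsumlip (by linarith : (0:ℝ) ≤ 2 * lam),
      hstep1, ihz]
end

section
/- (Iterated operator lemma.) Let f : ℝⁿ → ℝ be convex with every subgradient at every point of norm at most M > 0. Let γ > 0, let ρ : ℝ → ℝ, and let O : ℝ × ℝⁿ → ℝⁿ satisfy, for all λ ≥ 0 and all x, y ∈ ℝⁿ: ‖O(λ, x) − y‖² ≤ ‖x − y‖² − 2λ(f(O(λ, x)) − f(y)) + λρ(λ), and ‖O(λ, x) − x‖ ≤ λγ. Fix λ > 0 and J ≥ 1, and define x⁽⁰⁾ = x and x⁽ⁱ⁾ = O(λ/i, x⁽ⁱ⁻¹⁾) for i = 1, …, J. Then: (a) ‖x⁽ʲ⁾ − x⁽ˡ⁾‖ ≤ λγ Σ_{i=j+1}^{l} 1/i for all 0 ≤ j ≤ l ≤ J (so in particular ‖x⁽ᴶ⁾ − x‖ ≤ λγ Σ_{i=1}^{J} 1/i); and (b) for every y ∈ ℝⁿ: ‖x⁽ᴶ⁾ − y‖² ≤ ‖x − y‖² − 2λ(Σ_{i=1}^{J} 1/i)(f(x⁽ᴶ⁾)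 − f(y)) + λ[Σ_{i=1}^{J} (1/i)ρ(λ/i) + 2λγM Σ_{i=1}^{J} (1/i) Σ_{j=i+1}^{J} (1/j)]. -/
open Filter Topology

lemma exists_subgradient' {n : ℕ} (f : EuclideanSpace ℝ (Fin n) → ℝ)
    (hf : ConvexOn ℝ Set.univ f) (z : EuclideanSpace ℝ (Fin n)) :
    ∃ v : EuclideanSpace ℝ (Fin n), ∀ u, f u ≥ f z + inner ℝ v (u - z) := by
  have hcont : Continuous f := by
    have := hf.continuousOn isOpen_univ
    exact continuousOn_univ.mp this
  set S : Set (EuclideanSpace ℝ (Fin n) × ℝ) := {p | f p.1 < p.2} with hS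
  have hopen : IsOpen S := isOpen_lt (hcont.comp continuous_fst) continuous_snd
  have hconv : Convex ℝ S := by
    intro p hp q hq a b ha hb hab
    simp only [hS, Set.mem_setOf_eq] at hp hq
    have h1 := hf.2 (Set.mem_univ p.1) (Set.mem_univ q.1) ha hb hab
    simp only [smul_eq_mul] at h1
    show f (a • p.1 + b • q.1) < a * p.2 + b * q.2
    have h2 : a * f p.1 + b * f q.1 < a * p.2 + b * q.2 := by
      rcases eq_or_lt_of_le ha with h | h
      · have hb1 : b = 1 := by linarith
        simp [← h, hb1, hq]
      · have h3 := mul_lt_mul_of_pos_left hp h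
        have h4 := mul_le_mul_of_nonneg_left hq.le hb
        linarith
    exact lt_of_le_of_lt h1 h2
  have hz : ((z, f z) : EuclideanSpace ℝ (Fin n) × ℝ) ∉ S := by simp [hS]
  obtain ⟨g, hg⟩ := geometric_hahn_banach_point_open hconv hopen hz
  set c : ℝ := g (0, 1) with hc
  have hsplit : ∀ (u : EuclideanSpace ℝ (Fin n)) (t : ℝ), g (u, t) = g (u, 0) + t * c := by
    intro u t
    have he : ((u, t) : EuclideanSpace ℝ (Fin n) × ℝ)
        = (u, (0:ℝ)) + t • ((0 : EuclideanSpace ℝ (Fin n)), (1:ℝ)) := by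
      simp [Prod.ext_iff]
    rw [he, map_add, map_smul, smul_eq_mul, hc]
  have hcpos : 0 < c := by
    have h1 := hg (z, f z + 1) (by simp [hS])
    rw [hsplit z (f z + 1), hsplit z (f z)] at h1
    linarith
  have hkey : ∀ u, g (z, 0) + f z * c ≤ g (u, 0) + f u * c := by
    intro u
    have h2 : ∀ ε > (0:ℝ), g (z, 0) + f z * c < g (u, 0) + f u * c + ε := by
      intro ε hε
      have hm : ((u, f u + ε / c) : EuclideanSpace ℝ (Fin n) × ℝ) ∈ S := by
        simp only [hS, Set.mem_setOf_eq]
        have : 0 < ε / c := by positivity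
        linarith
      have h5 := hg (u, f u + ε / c) hm
      rw [hsplit u (f u + ε / c), hsplit z (f z)] at h5
      have hεc : (f u + ε / c) * c = f u * c + ε := by field_simp
      linarith
    by_contra hlt
    push_neg at hlt
    have := h2 ((g (z, 0) + f z * c - (g (u, 0) + f u * c)) / 2) (by linarith)
    linarith
  set L : EuclideanSpace ℝ (Fin n) →L[ℝ] ℝ :=
    (-(1/c)) • (g.comp (ContinuousLinearMap.inl ℝ (EuclideanSpace ℝ (Fin n)) ℝ)) with hL
  refine ⟨(InnerProductSpace.toDual ℝ (EuclideanSpace ℝ (Fin n))).symm L, fun u => ?_⟩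
  have hip : (inner ℝ ((InnerProductSpace.toDual ℝ (EuclideanSpace ℝ (Fin n))).symm L) (u - z) : ℝ)
      = L (u - z) := by
    exact InnerProductSpace.toDual_symm_apply
  rw [ge_iff_le, hip]
  have hLval : L (u - z) = -(1/c) * (g (u, 0) - g (z, 0)) := by
    have : ((u - z, (0:ℝ)) : EuclideanSpace ℝ (Fin n) × ℝ) = (u, (0:ℝ)) - (z, (0:ℝ)) := by
      simp [Prod.ext_iff]
    simp only [hL, ContinuousLinearMap.smul_apply, ContinuousLinearMap.comp_apply,
      ContinuousLinearMap.inl_apply, smul_eq_mul]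
    rw [this, map_sub]
  rw [hLval]
  have hk := hkey u
  have h6 : (f z - f u) * c ≤ g (u, 0) - g (z, 0) := by linarith
  have h7 := mul_le_mul_of_nonneg_left h6 (le_of_lt (by positivity : (0:ℝ) < 1/c))
  have h8 : 1/c * ((f z - f u) * c) = f z - f u := by field_simp
  rw [h8] at h7
  linarith

/-- Iterated operator lemma: applying an optimality operator `J` times with
diminishing stepsizes `λ/i` yields an operator with the same two properties. -/
theorem iterated_operator_lemma {n : ℕ}
    (f : EuclideanSpace ℝ (Fin n) → ℝ) (hf : ConvexOn ℝ Set.univ f)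
    (M : ℝ) (hM : 0 < M)
    (hsub : ∀ z v, (∀ u, f u ≥ f z + inner ℝ v (u - z)) → ‖v‖ ≤ M)
    (γ : ℝ) (hγ : 0 < γ) (ρ : ℝ → ℝ)
    (O : ℝ → EuclideanSpace ℝ (Fin n) → EuclideanSpace ℝ (Fin n))
    (hO1 : ∀ lam ≥ (0 : ℝ), ∀ x y, ‖O lam x - y‖ ^ 2
        ≤ ‖x - y‖ ^ 2 - 2 * lam * (f (O lam x) - f y) + lam * ρ lam)
    (hO2 : ∀ lam ≥ (0 : ℝ), ∀ x, ‖O lam x - x‖ ≤ lam * γ)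
    (lam : ℝ) (hlam : 0 < lam) (J : ℕ) (hJ : 1 ≤ J)
    (x : EuclideanSpace ℝ (Fin n))
    (w : ℕ → EuclideanSpace ℝ (Fin n)) (hw0 : w 0 = x)
    (hwrec : ∀ i, 1 ≤ i → i ≤ J → w i = O (lam / (i : ℝ)) (w (i - 1))) :
    (∀ j l, j ≤ l → l ≤ J →
      ‖w j - w l‖ ≤ lam * γ * ∑ i ∈ Finset.Icc (j + 1) l, (1 : ℝ) / (i : ℝ)) ∧
    (∀ y, ‖w J - y‖ ^ 2
        ≤ ‖x - y‖ ^ 2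
          - 2 * lam * (∑ i ∈ Finset.Icc 1 J, (1 : ℝ) / (i : ℝ)) * (f (w J) - f y)
          + lam * ((∑ i ∈ Finset.Icc 1 J, (1 / (i : ℝ)) * ρ (lam / (i : ℝ)))
            + 2 * lam * γ * M *
              ∑ i ∈ Finset.Icc 1 J, (1 / (i : ℝ)) *
                ∑ j ∈ Finset.Icc (i + 1) J, (1 : ℝ) / (j : ℝ))) := by
  -- Part (a)
  have ha : ∀ j l, j ≤ l → l ≤ J →
      ‖w j - w l‖ ≤ lam * γ * ∑ i ∈ Finset.Icc (j + 1) l, (1 : ℝ) / (i : ℝ) := by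
    intro j l hjl
    induction l, hjl using Nat.le_induction with
    | base =>
      intro _
      rw [Finset.Icc_eq_empty (by omega)]
      simp
    | succ l hl ih =>
      intro hlJ
      have hlJ' : l ≤ J := by omega
      have ihl := ih hlJ'
      have hrec := hwrec (l + 1) (by omega) hlJ
      simp only [Nat.add_sub_cancel] at hrec
      have hstep : ‖w (l + 1) - w l‖ ≤ lam / ((l : ℝ) + 1) * γ := by
        rw [hrec]
        have := hO2 (lam / ((l + 1 : ℕ) : ℝ)) (by positivity) (w l)
        push_cast at this ⊢
        exact this
      have htri : ‖w j - w (l + 1)‖ ≤ ‖w j - w l‖ + ‖w l - w (l + 1)‖ := by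
        have : w j - w (l + 1) = (w j - w l) + (w l - w (l + 1)) := by abel
        rw [this]; exact norm_add_le _ _
      rw [norm_sub_rev (w l)] at htri
      rw [Finset.sum_Icc_succ_top (by omega : j + 1 ≤ l + 1)]
      push_cast
      have he : lam / ((l : ℝ) + 1) * γ = lam * γ * (1 / ((l : ℝ) + 1)) := by ring
      rw [he] at hstep
      calc ‖w j - w (l + 1)‖ ≤ ‖w j - w l‖ + ‖w (l + 1) - w l‖ := htri
        _ ≤ lam * γ * (∑ i ∈ Finset.Icc (j + 1) l, (1 : ℝ) / (i : ℝ))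
            + lam * γ * (1 / ((l : ℝ) + 1)) := add_le_add ihl hstep
        _ = lam * γ * ((∑ i ∈ Finset.Icc (j + 1) l, (1 : ℝ) / (i : ℝ)) + 1 / ((l : ℝ) + 1)) := by
            ring
  refine ⟨ha, ?_⟩
  -- the core summed inequality
  have hb : ∀ k, 1 ≤ k → k ≤ J → ∀ y, ‖w k - y‖ ^ 2
      ≤ ‖x - y‖ ^ 2
        - 2 * lam * (∑ i ∈ Finset.Icc 1 k, (1 / (i : ℝ)) * (f (w i) - f y))
        + lam * ∑ i ∈ Finset.Icc 1 k, (1 / (i : ℝ)) * ρ (lam / (i : ℝ)) := by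
    intro k hk
    induction k, hk using Nat.le_induction with
    | base =>
      intro _ y
      have hrec := hwrec 1 le_rfl hJ
      simp only [Nat.sub_self] at hrec
      rw [hw0] at hrec
      have h1 := hO1 (lam / ((1 : ℕ) : ℝ)) (by positivity) x y
      rw [← hrec] at h1
      simp only [Nat.cast_one] at h1 ⊢
      rw [Finset.Icc_self, Finset.sum_singleton, Finset.sum_singleton]
      push_cast
      linarith
    | succ k hk ih =>
      intro hkJ y
      have hkJ' : k ≤ J := by omega
      have ihy := ih hkJ' y
      have hrec := hwrec (k + 1) (by omega) hkJ
      simp only [Nat.add_sub_cancel] at hrec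
      have h1 := hO1 (lam / ((k + 1 : ℕ) : ℝ)) (by positivity) (w k) y
      rw [← hrec] at h1
      rw [Finset.sum_Icc_succ_top (by omega : 1 ≤ k + 1),
        Finset.sum_Icc_succ_top (by omega : 1 ≤ k + 1)]
      have hpos : (0:ℝ) < ((k + 1 : ℕ) : ℝ) := by positivity
      have he1 : 2 * (lam / ((k + 1 : ℕ) : ℝ)) * (f (w (k + 1)) - f y)
          = 2 * lam * ((1 / ((k + 1 : ℕ) : ℝ)) * (f (w (k + 1)) - f y)) := by ring
      have he2 : lam / ((k + 1 : ℕ) : ℝ) * ρ (lam / ((k + 1 : ℕ) : ℝ))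
          = lam * ((1 / ((k + 1 : ℕ) : ℝ)) * ρ (lam / ((k + 1 : ℕ) : ℝ))) := by ring
      rw [he1, he2] at h1
      have hd : ‖w k - y‖ ^ 2 ≤ ‖x - y‖ ^ 2
          - 2 * lam * (∑ i ∈ Finset.Icc 1 k, (1 / (i : ℝ)) * (f (w i) - f y))
          + lam * ∑ i ∈ Finset.Icc 1 k, (1 / (i : ℝ)) * ρ (lam / (i : ℝ)) := ihy
      calc ‖w (k + 1) - y‖ ^ 2
          ≤ ‖w k - y‖ ^ 2
            - 2 * lam * ((1 / ((k + 1 : ℕ) : ℝ)) * (f (w (k + 1)) - f y))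
            + lam * ((1 / ((k + 1 : ℕ) : ℝ)) * ρ (lam / ((k + 1 : ℕ) : ℝ))) := h1
        _ ≤ _ := by push_cast at hd ⊢; linarith
  intro y
  -- Lipschitz-type bound via the subgradient at w J
  obtain ⟨v, hv⟩ := exists_subgradient' f hf (w J)
  have hvM : ‖v‖ ≤ M := hsub (w J) v hv
  set T : ℕ → ℝ := fun i => ∑ j ∈ Finset.Icc (i + 1) J, (1 : ℝ) / (j : ℝ) with hT
  have hfi : ∀ i, 1 ≤ i → i ≤ J → f (w J) - M * (lam * γ * T i) ≤ f (w i) := by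
    intro i hi1 hiJ
    have h1 := hv (w i)
    have h2 : |(inner ℝ v (w i - w J) : ℝ)| ≤ ‖v‖ * ‖w i - w J‖ := abs_real_inner_le_norm v _
    have h3 : ‖w i - w J‖ ≤ lam * γ * T i := ha i J hiJ le_rfl
    have h4 : ‖v‖ * ‖w i - w J‖ ≤ M * (lam * γ * T i) :=
      mul_le_mul hvM h3 (norm_nonneg _) hM.le
    have h5 : -(M * (lam * γ * T i)) ≤ (inner ℝ v (w i - w J) : ℝ) := by
      have := neg_abs_le (inner ℝ v (w i - w J) : ℝ)
      linarith
    linarith [h1]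
  -- compare the sums
  have hsum : (∑ i ∈ Finset.Icc 1 J, (1 : ℝ) / (i : ℝ)) * (f (w J) - f y)
        - M * lam * γ * (∑ i ∈ Finset.Icc 1 J, (1 / (i : ℝ)) * T i)
      ≤ ∑ i ∈ Finset.Icc 1 J, (1 / (i : ℝ)) * (f (w i) - f y) := by
    have step : ∀ i ∈ Finset.Icc 1 J,
        (1 / (i : ℝ)) * (f (w J) - f y) - M * lam * γ * ((1 / (i : ℝ)) * T i)
          ≤ (1 / (i : ℝ)) * (f (w i) - f y) := by
      intro i hi
      rw [Finset.mem_Icc] at hi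
      have hinv : (0:ℝ) ≤ 1 / (i : ℝ) := by positivity
      have := hfi i hi.1 hi.2
      nlinarith [mul_le_mul_of_nonneg_left this hinv]
    calc (∑ i ∈ Finset.Icc 1 J, (1 : ℝ) / (i : ℝ)) * (f (w J) - f y)
          - M * lam * γ * (∑ i ∈ Finset.Icc 1 J, (1 / (i : ℝ)) * T i)
        = ∑ i ∈ Finset.Icc 1 J,
            ((1 / (i : ℝ)) * (f (w J) - f y) - M * lam * γ * ((1 / (i : ℝ)) * T i)) := by
          rw [Finset.sum_sub_distrib, Finset.sum_mul, Finset.mul_sum]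
      _ ≤ _ := Finset.sum_le_sum step
  have hmain := hb J hJ le_rfl y
  set S := ∑ i ∈ Finset.Icc 1 J, (1 : ℝ) / (i : ℝ) with hSdef
  set B := ∑ i ∈ Finset.Icc 1 J, (1 / (i : ℝ)) * T i with hBdef
  set Q := ∑ i ∈ Finset.Icc 1 J, (1 / (i : ℝ)) * (f (w i) - f y) with hQdef
  have h3 : 2 * lam * (S * (f (w J) - f y) - M * lam * γ * B) ≤ 2 * lam * Q :=
    mul_le_mul_of_nonneg_left hsum (by positivity)
  nlinarith [hmain, h3]
end

section
/- Let X₀ ⊆ ℝⁿ be nonempty, closed and convex, let f : ℝⁿ → ℝ be convex and differentiable with ∇f Lipschitz continuous with constant L > 0, and let 0 < λ ≤ 1/L. For x ∈ ℝⁿ define the projected gradient step G(λ, x) = P_{X₀}(x − λ∇f(x)). Then for every y ∈ X₀: 2λ(f(y) − f(G(λ, x))) ≥ ‖y − G(λ, x)‖² − ‖y − x‖². -/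
open Filter Topology RealInnerProductSpace

section Aux

variable {E : Type*} [NormedAddCommGroup E] [InnerProductSpace ℝ E] [CompleteSpace E]

private lemma line_hasDerivAt (f : E → ℝ) (g : E → E) (hg : ∀ z, HasGradientAt f (g z) z)
    (a v : E) (t : ℝ) :
    HasDerivAt (fun s : ℝ => f (a + s • v)) ⟪g (a + t • v), v⟫ t := by
  have h1 : HasDerivAt (fun s : ℝ => a + s • v) v t := by
    simpa using ((hasDerivAt_id t).smul_const v).const_add a
  have h2 := ((hg (a + t • v)).hasFDerivAt).comp_hasDerivAt t h1
  simp at h2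
  exact h2

/-- Gradient inequality for a convex function. -/
private lemma convex_grad_ineq (f : E → ℝ) (hf : ConvexOn ℝ Set.univ f)
    (g : E → E) (hg : ∀ z, HasGradientAt f (g z) z) (x y : E) :
    f x + ⟪g x, y - x⟫ ≤ f y := by
  set v := y - x with hv
  have hD : HasDerivAt (fun s : ℝ => f (x + s • v)) ⟪g x, v⟫ 0 := by
    simpa using line_hasDerivAt f g hg x v 0
  have hslope' : Tendsto (slope (fun s : ℝ => f (x + s • v)) 0) (𝓝[>] (0:ℝ))
      (𝓝 ⟪g x, v⟫) :=
    (hasDerivAt_iff_tendsto_slope.mp hD).mono_left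
      (nhdsWithin_mono 0 (fun t ht => ne_of_gt ht))
  have hub : ∀ᶠ t in 𝓝[>] (0:ℝ), slope (fun s : ℝ => f (x + s • v)) 0 t ≤ f y - f x := by
    filter_upwards [Ioo_mem_nhdsGT_of_mem (by norm_num : (0:ℝ) ∈ Set.Ico 0 1)] with t ht
    have ht0 : 0 < t := ht.1
    have ht1 : t < 1 := ht.2
    have hconv := hf.2 (Set.mem_univ x) (Set.mem_univ y)
      (by linarith : (0:ℝ) ≤ 1 - t) (le_of_lt ht0) (by ring)
    have hxy : (1 - t) • x + t • y = x + t • v := by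
      rw [hv]; module
    rw [hxy] at hconv
    have hval : slope (fun s : ℝ => f (x + s • v)) 0 t = (f (x + t • v) - f x) / t := by
      simp [slope_def_field]
    rw [hval, div_le_iff₀ ht0]
    simp only [smul_eq_mul] at hconv
    nlinarith [hconv]
  have := le_of_tendsto hslope' hub
  linarith

/-- Descent lemma: quadratic upper bound for a function with Lipschitz gradient. -/
private lemma descent_lemma (f : E → ℝ) (g : E → E) (hg : ∀ z, HasGradientAt f (g z) z)
    (L : ℝ) (hL : 0 < L) (hLip : LipschitzWith (Real.toNNReal L) g) (a b : E) :
    f b ≤ f a + ⟪g a, b - a⟫ + L / 2 * ‖b - a‖ ^ 2 := by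
  set v := b - a with hv
  set h : ℝ → ℝ := fun t => f (a + t • v) - t * ⟪g a, v⟫ - L / 2 * ‖v‖ ^ 2 * t ^ 2 with hh
  have hD : ∀ t : ℝ, HasDerivAt h
      (⟪g (a + t • v), v⟫ - ⟪g a, v⟫ - L / 2 * ‖v‖ ^ 2 * (2 * t)) t := by
    intro t
    have h1 := line_hasDerivAt f g hg a v t
    have h2 : HasDerivAt (fun s : ℝ => s * ⟪g a, v⟫) ⟪g a, v⟫ t := by
      simpa using (hasDerivAt_id t).mul_const ⟪g a, v⟫
    have h3 : HasDerivAt (fun s : ℝ => L / 2 * ‖v‖ ^ 2 * s ^ 2)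
        (L / 2 * ‖v‖ ^ 2 * (2 * t)) t := by
      have h3' := (hasDerivAt_pow 2 t).const_mul (L / 2 * ‖v‖ ^ 2)
      refine h3'.congr_deriv ?_
      push_cast
      ring
    exact (h1.sub h2).sub h3
  have hanti : AntitoneOn h (Set.Icc 0 1) := by
    apply antitoneOn_of_deriv_nonpos (convex_Icc 0 1)
    · exact fun t _ => (hD t).differentiableAt.continuousAt.continuousWithinAt
    · intro t _
      exact (hD t).differentiableAt.differentiableWithinAt
    · intro t ht
      rw [interior_Icc] at ht
      rw [(hD t).deriv]
      have hinner : ⟪g (a + t • v) - g a, v⟫ ≤ ‖g (a + t • v) - g a‖ * ‖v‖ :=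
        real_inner_le_norm _ _
      have hlipb : ‖g (a + t • v) - g a‖ ≤ L * (t * ‖v‖) := by
        have := hLip.dist_le_mul (a + t • v) a
        rw [dist_eq_norm, dist_eq_norm] at this
        have h0 : (a + t • v) - a = t • v := by abel
        rw [h0] at this
        have h1 : ‖g (a + t • v) - g a‖ ≤ L * ‖t • v‖ := by
          rwa [Real.coe_toNNReal L hL.le] at this
        rwa [norm_smul, Real.norm_eq_abs, abs_of_pos ht.1] at h1
      have hre : ⟪g (a + t • v), v⟫ - ⟪g a, v⟫ = ⟪g (a + t • v) - g a, v⟫ := by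
        rw [inner_sub_left]
      rw [hre]
      have hchain : ⟪g (a + t • v) - g a, v⟫ ≤ L / 2 * ‖v‖ ^ 2 * (2 * t) := by
        calc ⟪g (a + t • v) - g a, v⟫ ≤ ‖g (a + t • v) - g a‖ * ‖v‖ := hinner
          _ ≤ L * (t * ‖v‖) * ‖v‖ := mul_le_mul_of_nonneg_right hlipb (norm_nonneg v)
          _ = L / 2 * ‖v‖ ^ 2 * (2 * t) := by ring
      linarith
  have h10 : h 1 ≤ h 0 := hanti (by norm_num) (by norm_num) (by norm_num)
  have e1 : a + (1:ℝ) • v = b := by rw [hv]; module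
  have e0 : a + (0:ℝ) • v = a := by simp
  simp only [hh, e1, e0, one_mul, one_pow, zero_mul, mul_zero] at h10
  nlinarith [h10]

/-- Variational characterization of the projection from the nearest-point property. -/
private lemma proj_inner_le (X₀ : Set E) (hX₀cv : Convex ℝ X₀)
    (P : E → E) (hPmem : ∀ z, P z ∈ X₀) (hPnear : ∀ z, ∀ w ∈ X₀, ‖z - P z‖ ≤ ‖z - w‖)
    (z : E) (w : E) (hw : w ∈ X₀) : ⟪z - P z, w - P z⟫ ≤ 0 := by
  haveI : Nonempty X₀ := ⟨⟨P z, hPmem z⟩⟩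
  have hinf : ‖z - P z‖ = ⨅ w : X₀, ‖z - (w : E)‖ := by
    apply le_antisymm
    · exact le_ciInf fun w => hPnear z w w.2
    · have hbdd : BddBelow (Set.range fun w : X₀ => ‖z - (w : E)‖) :=
        ⟨0, by rintro _ ⟨u, rfl⟩; exact norm_nonneg _⟩
      exact ciInf_le hbdd ⟨P z, hPmem z⟩
  exact (norm_eq_iInf_iff_real_inner_le_zero hX₀cv (hPmem z)).mp hinf w hw

end Aux

/-- The projected gradient step inequality for a convex function with
Lipschitz gradient, for stepsizes `0 < λ ≤ 1/L`. -/
theorem projected_gradient_step_inequality {n : ℕ}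
    (X₀ : Set (EuclideanSpace ℝ (Fin n)))
    (hX₀ne : X₀.Nonempty) (hX₀cl : IsClosed X₀) (hX₀cv : Convex ℝ X₀)
    (f : EuclideanSpace ℝ (Fin n) → ℝ) (hf : ConvexOn ℝ Set.univ f)
    (g : EuclideanSpace ℝ (Fin n) → EuclideanSpace ℝ (Fin n))
    (hgrad : ∀ z, HasGradientAt f (g z) z)
    (L : ℝ) (hL : 0 < L) (hLip : LipschitzWith (Real.toNNReal L) g)
    (lam : ℝ) (hlam : 0 < lam) (hlamL : lam ≤ 1 / L)
    -- `P` is the Euclidean projection onto `X₀`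
    (P : EuclideanSpace ℝ (Fin n) → EuclideanSpace ℝ (Fin n))
    (hPmem : ∀ z, P z ∈ X₀) (hPnear : ∀ z, ∀ w ∈ X₀, ‖z - P z‖ ≤ ‖z - w‖)
    (x : EuclideanSpace ℝ (Fin n)) (y : EuclideanSpace ℝ (Fin n)) (hy : y ∈ X₀) :
    2 * lam * (f y - f (P (x - lam • g x)))
      ≥ ‖y - P (x - lam • g x)‖ ^ 2 - ‖y - x‖ ^ 2 := by
  set xp := P (x - lam • g x) with hxp
  -- descent lemma
  have hdesc : f xp ≤ f x + ⟪g x, xp - x⟫ + L / 2 * ‖xp - x‖ ^ 2 :=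
    descent_lemma f g hgrad L hL hLip x xp
  -- convexity gradient inequality
  have hconv : f x + ⟪g x, y - x⟫ ≤ f y := convex_grad_ineq f hf g hgrad x y
  -- projection inequality
  have hproj : ⟪(x - lam • g x) - xp, y - xp⟫ ≤ 0 :=
    proj_inner_le X₀ hX₀cv P hPmem hPnear (x - lam • g x) y hy
  have hproj' : lam * ⟪g x, y - xp⟫ ≥ ⟪x - xp, y - xp⟫ := by
    have : ⟪(x - lam • g x) - xp, y - xp⟫
        = ⟪x - xp, y - xp⟫ - lam * ⟪g x, y - xp⟫ := by
      have : (x - lam • g x) - xp = (x - xp) - lam • g x := by abel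
      rw [this, inner_sub_left, real_inner_smul_left]
    linarith [hproj]
  -- norm identity
  have hnorm : ‖y - x‖ ^ 2 = ‖y - xp‖ ^ 2 + 2 * ⟪y - xp, xp - x⟫ + ‖xp - x‖ ^ 2 := by
    have hsum : y - x = (y - xp) + (xp - x) := by abel
    rw [hsum, norm_add_sq_real]
  have hinner_flip : ⟪y - xp, xp - x⟫ = -⟪x - xp, y - xp⟫ := by
    have h1 : xp - x = -(x - xp) := by abel
    rw [h1, inner_neg_right, real_inner_comm]
  -- inner product splitting
  have hsplit : ⟪g x, y - xp⟫ = ⟪g x, y - x⟫ - ⟪g x, xp - x⟫ := by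
    have h1 : y - xp = (y - x) - (xp - x) := by abel
    rw [h1, inner_sub_right]
  -- combine: f y - f xp ≥ ⟪g x, y - xp⟫ - L/2 ‖xp - x‖²
  have hkey : f y - f xp ≥ ⟪g x, y - xp⟫ - L / 2 * ‖xp - x‖ ^ 2 := by
    rw [hsplit]; linarith
  have hlamL' : lam * L ≤ 1 := by
    rw [le_div_iff₀ hL] at hlamL
    linarith
  -- final combination
  have hfinal : 2 * lam * (f y - f xp)
      ≥ 2 * ⟪x - xp, y - xp⟫ - ‖xp - x‖ ^ 2 := by
    have h1 : 2 * lam * (f y - f xp)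
        ≥ 2 * lam * ⟪g x, y - xp⟫ - lam * L * ‖xp - x‖ ^ 2 := by
      nlinarith [hkey, hlam]
    nlinarith [hproj', sq_nonneg ‖xp - x‖, hlam]
  linarith [hfinal, hnorm, hinner_flip]
end

section
/- (Equivalence of the Huberized and least-squares lower-level problems.) Let X₀ ⊆ ℝⁿ be nonempty, let R be a real m×n matrix with rows r₁ᵀ, …, r_mᵀ, let b ∈ ℝᵐ, and let x̃ ∈ X₀ be such that Δ := ‖Rx̃ − b‖ > 0. Define q(x) = (1/2)‖Rx − b‖², the Huber function h(t) = t² if |t| < Δ and h(t) = 2Δ|t| − Δ² otherwise, and f₀(x) = (1/2)Σ_{i=1}^m h(⟨r_i, x⟩ − b_i). Then the set of minimizers of f₀ over X₀ equals the set of minimizers of q over X₀: {x ∈ X₀ : f₀(x) ≤ f₀(y) for all y ∈ X₀} = {x ∈ X₀ : q(x) ≤ q(y) for all y ∈ X₀}. -/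
open Filter Topology Matrix

/-- Equivalence of the Huberized and least-squares lower-level problems:
the minimizers over `X₀` of the Huberized function `f₀` coincide with the
minimizers of the least-squares function `q`. -/
theorem huber_least_squares_equivalence {m n : ℕ}
    (X₀ : Set (EuclideanSpace ℝ (Fin n))) (hX₀ne : X₀.Nonempty)
    (R : Matrix (Fin m) (Fin n) ℝ) (b : EuclideanSpace ℝ (Fin m))
    (xt : EuclideanSpace ℝ (Fin n)) (hxt : xt ∈ X₀)
    (Δ : ℝ)
    (hΔ : Δ = ‖(WithLp.equiv 2 (Fin m → ℝ)).symm (R.mulVec xt) - b‖)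
    (hΔpos : 0 < Δ)
    (q : EuclideanSpace ℝ (Fin n) → ℝ)
    (hq : ∀ x, q x = ‖(WithLp.equiv 2 (Fin m → ℝ)).symm (R.mulVec x) - b‖ ^ 2 / 2)
    (h : ℝ → ℝ)
    (hh : ∀ t, h t = if |t| < Δ then t ^ 2 else 2 * Δ * |t| - Δ ^ 2)
    (f₀ : EuclideanSpace ℝ (Fin n) → ℝ)
    (hf₀ : ∀ x, f₀ x = (∑ i, h (R.mulVec x i - b i)) / 2) :
    {x ∈ X₀ | ∀ y ∈ X₀, f₀ x ≤ f₀ y} = {x ∈ X₀ | ∀ y ∈ X₀, q x ≤ q y} := by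
  -- rewrite q as a sum of squares
  have hnorm : ∀ x, ‖(WithLp.equiv 2 (Fin m → ℝ)).symm (R.mulVec x) - b‖ ^ 2
      = ∑ i, (R.mulVec x i - b i) ^ 2 := by
    intro x
    rw [EuclideanSpace.norm_eq, Real.sq_sqrt (by positivity)]
    refine Finset.sum_congr rfl fun i _ => ?_
    simp [sq_abs]
  have hq' : ∀ x, q x = (∑ i, (R.mulVec x i - b i) ^ 2) / 2 := by
    intro x; rw [hq, hnorm]
  -- basic facts about h
  have hle : ∀ t : ℝ, h t ≤ t ^ 2 := by
    intro t
    rw [hh]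
    split_ifs with ht
    · exact le_rfl
    · nlinarith [sq_nonneg (|t| - Δ), sq_abs t]
  have hnn : ∀ t : ℝ, 0 ≤ h t := by
    intro t
    rw [hh]
    split_ifs with ht
    · positivity
    · push_neg at ht; nlinarith
  have heq : ∀ t : ℝ, |t| ≤ Δ → h t = t ^ 2 := by
    intro t ht
    rw [hh]
    split_ifs with ht'
    · rfl
    · push_neg at ht'
      have : |t| = Δ := le_antisymm ht ht'
      nlinarith [sq_abs t]
  have hsmall : ∀ t : ℝ, h t ≤ Δ ^ 2 → |t| ≤ Δ := by
    intro t ht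
    rw [hh] at ht
    split_ifs at ht with ht'
    · exact ht'.le
    · nlinarith
  -- if all residuals are small, f₀ = q
  have hfq : ∀ x : EuclideanSpace ℝ (Fin n), (∀ i, |R.mulVec x i - b i| ≤ Δ) → f₀ x = q x := by
    intro x hx
    rw [hf₀, hq']
    congr 1
    exact Finset.sum_congr rfl fun i _ => heq _ (hx i)
  -- f₀ ≤ q always
  have hfle : ∀ x, f₀ x ≤ q x := by
    intro x
    rw [hf₀, hq']
    have := Finset.sum_le_sum (s := Finset.univ) (fun i _ => hle (R.mulVec x i - b i))
    linarith
  -- q x ≤ Δ²/2 → residuals small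
  have hqsmall : ∀ x, q x ≤ Δ ^ 2 / 2 → ∀ i, |R.mulVec x i - b i| ≤ Δ := by
    intro x hx i
    rw [hq'] at hx
    have h1 : (R.mulVec x i - b i) ^ 2 ≤ ∑ j, (R.mulVec x j - b j) ^ 2 :=
      Finset.single_le_sum (f := fun j => (R.mulVec x j - b j) ^ 2)
        (fun j _ => sq_nonneg _) (Finset.mem_univ i)
    have : (R.mulVec x i - b i) ^ 2 ≤ Δ ^ 2 := by linarith
    exact abs_le_abs (by nlinarith [abs_nonneg (R.mulVec x i - b i), sq_abs (R.mulVec x i - b i)]) (by nlinarith [abs_nonneg (R.mulVec x i - b i), sq_abs (R.mulVec x i - b i)]) |>.trans_eq (abs_of_pos hΔpos)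
  -- f₀ x ≤ Δ²/2 → residuals small
  have hfsmall : ∀ x, f₀ x ≤ Δ ^ 2 / 2 → ∀ i, |R.mulVec x i - b i| ≤ Δ := by
    intro x hx i
    rw [hf₀] at hx
    have h1 : h (R.mulVec x i - b i) ≤ ∑ j, h (R.mulVec x j - b j) :=
      Finset.single_le_sum (f := fun j => h (R.mulVec x j - b j))
        (fun j _ => hnn _) (Finset.mem_univ i)
    exact hsmall _ (by linarith)
  -- q xt = Δ²/2
  have hqxt : q xt = Δ ^ 2 / 2 := by rw [hq, ← hΔ]
  have hfxt : f₀ xt = Δ ^ 2 / 2 := by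
    rw [hfq xt (hqsmall xt hqxt.le), hqxt]
  ext x
  simp only [Set.mem_setOf_eq]
  constructor
  · rintro ⟨hxX, hmin⟩
    refine ⟨hxX, fun y hy => ?_⟩
    have hx2 : f₀ x ≤ Δ ^ 2 / 2 := hfxt ▸ hmin xt hxt
    have hxeq : f₀ x = q x := hfq x (hfsmall x hx2)
    calc q x = f₀ x := hxeq.symm
    _ ≤ f₀ y := hmin y hy
    _ ≤ q y := hfle y
  · rintro ⟨hxX, hmin⟩
    refine ⟨hxX, fun y hy => ?_⟩
    have hx2 : q x ≤ Δ ^ 2 / 2 := hqxt ▸ hmin xt hxt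
    have hxeq : f₀ x = q x := hfq x (hqsmall x hx2)
    by_contra hlt
    push_neg at hlt
    have hy2 : f₀ y ≤ Δ ^ 2 / 2 := by linarith [hxeq ▸ hx2]
    have hyeq : f₀ y = q y := hfq y (hfsmall y hy2)
    have := hmin y hy
    linarith [hxeq, hyeq]
end

section
/- (Asymptotic optimality of best-so-far values.) Let f : ℝⁿ → ℝ, let y ∈ ℝⁿ, let β > 0, let {x_k} be a sequence in ℝⁿ, let {λ_k} be positive reals with Σ_{k=0}^∞ λ_k = ∞, and let {s_k} be nonnegative reals with s_k/λ_k → 0, such that for all k: ‖x_{k+1} − y‖² ≤ ‖x_k − y‖² − βλ_k(f(x_k) − f(y)) + s_k. Then limsup_{n → ∞} (min_{0 ≤ k ≤ n} f(x_k)) ≤ f(y). -/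
open Filter Topology

/-- Key lemma: under the descent recursion with divergent steps and relatively
vanishing errors, for every `ε > 0` some iterate has value below `f y + ε`. -/
theorem best_so_far_key {X : Type*} [NormedAddCommGroup X]
    (f : X → ℝ) (y : X) (β : ℝ) (hβ : 0 < β)
    (x : ℕ → X) (lam s : ℕ → ℝ)
    (hlam : ∀ k, 0 < lam k)
    (hdiv : Tendsto (fun N => ∑ k ∈ Finset.range (N + 1), lam k) atTop atTop)
    (hsl : Tendsto (fun k => s k / lam k) atTop (𝓝 0))
    (hrec : ∀ k, ‖x (k + 1) - y‖ ^ 2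
        ≤ ‖x k - y‖ ^ 2 - β * lam k * (f (x k) - f y) + s k)
    (ε : ℝ) (hε : 0 < ε) : ∃ k, f (x k) < f y + ε := by
  by_contra hcon
  push_neg at hcon
  set a : ℕ → ℝ := fun k => ‖x k - y‖ ^ 2 with ha
  have hc : 0 < β * ε / 2 := by positivity
  obtain ⟨K, hK⟩ := (hsl.eventually (gt_mem_nhds hc)).exists_forall_of_atTop
  have hstep : ∀ k, K ≤ k → a (k + 1) ≤ a k - (β * ε / 2) * lam k := by
    intro k hk
    have h1 := hrec k
    have h2 : s k < (β * ε / 2) * lam k := by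
      have := hK k hk
      rwa [div_lt_iff₀ (hlam k)] at this
    have h3 : ε ≤ f (x k) - f y := by linarith [hcon k]
    have h4 : β * lam k * ε ≤ β * lam k * (f (x k) - f y) := by
      have : 0 ≤ β * lam k := mul_nonneg hβ.le (hlam k).le
      exact mul_le_mul_of_nonneg_left h3 this
    simp only [ha]
    nlinarith [hlam k]
  have hmain : ∀ N, K ≤ N → a N + (β * ε / 2) * ∑ k ∈ Finset.Ico K N, lam k ≤ a K := by
    intro N hN
    induction N, hN using Nat.le_induction with
    | base => simp
    | succ N hN ih =>
      rw [Finset.sum_Ico_succ_top hN]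
      have := hstep N hN
      nlinarith
  set C := (∑ k ∈ Finset.range K, lam k) + a K / (β * ε / 2) with hC
  obtain ⟨N, hNgt, hNK⟩ := ((hdiv.eventually_gt_atTop C).and (eventually_ge_atTop K)).exists
  have hsplit : ∑ k ∈ Finset.range K, lam k + ∑ k ∈ Finset.Ico K (N + 1), lam k
      = ∑ k ∈ Finset.range (N + 1), lam k :=
    Finset.sum_range_add_sum_Ico _ (by omega)
  have h1 := hmain (N + 1) (by omega)
  have h2 : 0 ≤ a (N + 1) := by positivity
  have h3 : ∑ k ∈ Finset.Ico K (N + 1), lam k ≤ a K / (β * ε / 2) := by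
    rw [le_div_iff₀ hc]
    nlinarith
  have : ∑ k ∈ Finset.range (N + 1), lam k ≤ C := by rw [← hsplit, hC]; linarith
  linarith

/-- Asymptotic optimality of best-so-far values: under the per-iteration
descent inequality with divergent stepsizes and relatively vanishing errors,
the best function value seen so far is asymptotically at most `f y`. -/
theorem best_so_far_asymptotic_optimality {n : ℕ}
    (f : EuclideanSpace ℝ (Fin n) → ℝ) (y : EuclideanSpace ℝ (Fin n))
    (β : ℝ) (hβ : 0 < β)
    (x : ℕ → EuclideanSpace ℝ (Fin n)) (lam s : ℕ → ℝ)
    (hlam : ∀ k, 0 < lam k) (hs : ∀ k, 0 ≤ s k)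
    (hdiv : Tendsto (fun N => ∑ k ∈ Finset.range (N + 1), lam k) atTop atTop)
    (hsl : Tendsto (fun k => s k / lam k) atTop (𝓝 0))
    (hrec : ∀ k, ‖x (k + 1) - y‖ ^ 2
        ≤ ‖x k - y‖ ^ 2 - β * lam k * (f (x k) - f y) + s k) :
    Filter.limsup
        (fun N => ((Finset.range (N + 1)).inf'
          (Finset.nonempty_range_iff.mpr (Nat.succ_ne_zero N))
          (fun k => f (x k)) : EReal)) atTop
      ≤ (f y : EReal) := by
  rw [Filter.limsup_le_iff]
  intro b hb
  induction b with
  | bot => exact absurd hb (by simp)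
  | top =>
    filter_upwards with N
    exact lt_of_le_of_lt
      (Finset.inf'_le _ (Finset.mem_range.mpr (Nat.succ_pos N)))
      (EReal.coe_lt_top (f (x 0)))
  | coe r =>
    rw [gt_iff_lt, EReal.coe_lt_coe_iff] at hb
    obtain ⟨k₀, hk₀⟩ := best_so_far_key f y β hβ x lam s hlam hdiv hsl hrec
      (r - f y) (by linarith)
    filter_upwards [eventually_ge_atTop k₀] with N hN
    calc ((Finset.range (N + 1)).inf'
          (Finset.nonempty_range_iff.mpr (Nat.succ_ne_zero N))
          (fun k => ((f (x k) : ℝ) : EReal)))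
        ≤ ((f (x k₀) : ℝ) : EReal) :=
          Finset.inf'_le _ (Finset.mem_range.mpr (by omega))
      _ < (r : EReal) := EReal.coe_lt_coe_iff.mpr (by linarith)
end
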